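/- Let X, Y be subspaces of ℝ^d with X ⊆ Y and X + span(a) ⊆ Y for a unit vector a ∉ X. Let a' be the unit vector spanning (X + span(a)) ∩ X^⊥ and Ẏ = Y ∩ (a')^⊥. Then for any v ∈ ℝ^d and any monotone nondecreasing concave ρ: ℝ → ℝ with ρ(0)=0, ρ(‖Π_X v‖² + ⟨a', v⟩²) − ρ(‖Π_X v‖²) ≥ ρ(‖Π_Ẏ v‖² + ⟨a', v⟩²) − ρ(‖Π_Ẏ v‖²). -/

import Mathlib

open RealInnerProductSpace

lemma concave_increments {ρ : ℝ → ℝ} (h : ConcaveOn ℝ Set.univ ρ) {s t c : ℝ}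
    (hst : s ≤ t) (hc : 0 ≤ c) : ρ (t + c) - ρ t ≤ ρ (s + c) - ρ s := by
  rcases eq_or_lt_of_le hc with rfl | hc
  · simp
  rcases eq_or_lt_of_le hst with rfl | hst
  · simp
  have hD : (0:ℝ) < t + c - s := by linarith
  set lam := c / (t + c - s) with hlam
  set mu := (t - s) / (t + c - s) with hmu
  have hlam0 : 0 ≤ lam := div_nonneg hc.le hD.le
  have hmu0 : 0 ≤ mu := div_nonneg (by linarith) hD.le
  have hsum : mu + lam = 1 := by rw [hmu, hlam, ← add_div]; rw [div_eq_one_iff_eq hD.ne']; ring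
  have h1 : ρ (s + c) ≥ mu * ρ s + lam * ρ (t + c) := by
    have := h.2 (Set.mem_univ s) (Set.mem_univ (t + c)) hmu0 hlam0 hsum
    have heq : mu • s + lam • (t + c) = s + c := by
      rw [hmu, hlam, smul_eq_mul, smul_eq_mul]; field_simp; ring
    rw [heq] at this
    simpa using this
  have h2 : ρ t ≥ lam * ρ s + mu * ρ (t + c) := by
    have := h.2 (Set.mem_univ s) (Set.mem_univ (t + c)) hlam0 hmu0 (by linarith)
    have heq : lam • s + mu • (t + c) = t := by
      rw [hmu, hlam, smul_eq_mul, smul_eq_mul]; field_simp; ring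
    rw [heq] at this
    simpa using this
  have e1 : (mu + lam) * ρ s = ρ s := by rw [hsum, one_mul]
  have e2 : (mu + lam) * ρ (t + c) = ρ (t + c) := by rw [hsum, one_mul]
  nlinarith [h1, h2, e1, e2]

lemma proj_norm_mono {d : ℕ} {U W : Submodule ℝ (EuclideanSpace ℝ (Fin d))}
    (h : U ≤ W) (v : EuclideanSpace ℝ (Fin d)) :
    ‖Submodule.orthogonalProjectionOnto U v‖ ≤ ‖Submodule.orthogonalProjectionOnto W v‖ := by
  rw [← Submodule.orthogonalProjectionOnto_starProjection_of_le h v]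
  calc ‖Submodule.orthogonalProjectionOnto U (Submodule.orthogonalProjectionOnto W v)‖
      ≤ ‖Submodule.orthogonalProjectionOnto U‖ * ‖((Submodule.orthogonalProjectionOnto W v) : EuclideanSpace ℝ (Fin d))‖ :=
        (Submodule.orthogonalProjectionOnto U).le_opNorm _
    _ ≤ 1 * ‖((Submodule.orthogonalProjectionOnto W v) : EuclideanSpace ℝ (Fin d))‖ := by
        gcongr; exact Submodule.orthogonalProjectionOnto_norm_le U
    _ = ‖Submodule.orthogonalProjectionOnto W v‖ := one_mul _

/-- Core computation for upward DR-submodularity of the generalized PCA objective: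
with `X ⊆ Y` subspaces of `ℝ^d`, `a ∉ X` a unit vector with `X + span a ⊆ Y`,
`a'` the unit vector spanning `(X + span a) ∩ X^⊥`, and `Ẏ = Y ∩ (span a')^⊥`,
for any `v` and monotone nondecreasing concave `ρ` with `ρ 0 = 0`,
`ρ(‖Π_X v‖² + ⟨a',v⟩²) − ρ(‖Π_X v‖²) ≥ ρ(‖Π_Ẏ v‖² + ⟨a',v⟩²) − ρ(‖Π_Ẏ v‖²)`. -/
theorem upward_dr_pca (d : ℕ)
    (X Y : Submodule ℝ (EuclideanSpace ℝ (Fin d))) (hXY : X ≤ Y)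
    (a : EuclideanSpace ℝ (Fin d)) (hau : ‖a‖ = 1) (haX : a ∉ X)
    (haY : X ⊔ (ℝ ∙ a) ≤ Y)
    (a' : EuclideanSpace ℝ (Fin d)) (ha'u : ‖a'‖ = 1)
    (ha'span : (ℝ ∙ a') = (X ⊔ (ℝ ∙ a)) ⊓ Xᗮ)
    (v : EuclideanSpace ℝ (Fin d)) (ρ : ℝ → ℝ)
    (hρmono : Monotone ρ) (hρconc : ConcaveOn ℝ Set.univ ρ) (hρ0 : ρ 0 = 0) :
    ρ (‖Submodule.orthogonalProjectionOnto X v‖ ^ 2 + ⟪a', v⟫ ^ 2) - ρ (‖Submodule.orthogonalProjectionOnto X v‖ ^ 2) ≥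
      ρ (‖Submodule.orthogonalProjectionOnto (Y ⊓ (ℝ ∙ a')ᗮ) v‖ ^ 2 + ⟪a', v⟫ ^ 2) -
        ρ (‖Submodule.orthogonalProjectionOnto (Y ⊓ (ℝ ∙ a')ᗮ) v‖ ^ 2) := by
  have hXle : X ≤ Y ⊓ (ℝ ∙ a')ᗮ := by
    refine le_inf hXY ?_
    have h1 : (ℝ ∙ a') ≤ Xᗮ := ha'span ▸ inf_le_right
    exact le_trans (Submodule.le_orthogonal_orthogonal X) (Submodule.orthogonal_le h1)
  have hnorm : ‖Submodule.orthogonalProjectionOnto X v‖ ≤ ‖Submodule.orthogonalProjectionOnto (Y ⊓ (ℝ ∙ a')ᗮ) v‖ :=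
    proj_norm_mono hXle v
  have hsq : ‖Submodule.orthogonalProjectionOnto X v‖ ^ 2 ≤ ‖Submodule.orthogonalProjectionOnto (Y ⊓ (ℝ ∙ a')ᗮ) v‖ ^ 2 := by
    gcongr
  exact concave_increments hρconc hsq (sq_nonneg _)
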